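/- Let a_1, ..., a_m be elements of L = GF(2^n) and k_1, ..., k_m positive integers, and set Q(x) = \sum_{i=1}^m a_i x^{2^{k_i}+1} and L(u) = \sum_{i=1}^m ( a_i u^{2^{k_i}} + a_i^{2^{-k_i}} u^{2^{-k_i}} ). Then ( \sum_{x \in L} (-1)^{Tr(Q(x))} )^2 equals either 0 or 2^n \cdot |K|, where K = { u \in L : L(u) = 0 }. -/

import Mathlib

noncomputable instance {n : ℕ} : Fintype (GaloisField 2 n) := Fintype.ofFinite _

/-- `ipow j x` is `x^{2^{-j}}`, the unique element of `GF(2^n)` whose `2^j`-th power is `x`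
(the inverse of the `j`-th iterate of the Frobenius automorphism). -/
noncomputable def ipow {n : ℕ} (j : ℕ) (x : GaloisField 2 n) : GaloisField 2 n :=
  Function.invFun (fun y : GaloisField 2 n => y ^ 2 ^ j) x

lemma pow_bij {n : ℕ} (j : ℕ) :
    Function.Bijective (fun y : GaloisField 2 n => y ^ 2 ^ j) := by
  have h := bijective_iterateFrobenius (GaloisField 2 n) 2 j
  exact h

lemma ipow_pow {n : ℕ} (j : ℕ) (x : GaloisField 2 n) : (ipow j x) ^ 2 ^ j = x :=
  Function.rightInverse_invFun (pow_bij j).2 x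

lemma ipow_add {n : ℕ} (j : ℕ) (x y : GaloisField 2 n) :
    ipow j (x + y) = ipow j x + ipow j y := by
  apply (pow_bij j).1
  show (ipow j (x + y)) ^ 2 ^ j = (ipow j x + ipow j y) ^ 2 ^ j
  rw [ipow_pow, add_pow_char_pow, ipow_pow, ipow_pow]

lemma zmod2_pow_pow (c : ZMod 2) (j : ℕ) : c ^ 2 ^ j = c := by
  induction j with
  | zero => simp
  | succ j ih => rw [pow_succ, pow_mul, ih, ZMod.pow_card]

noncomputable def frobAlg (n j : ℕ) : GaloisField 2 n ≃ₐ[ZMod 2] GaloisField 2 n :=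
  AlgEquiv.ofRingEquiv (f := iterateFrobeniusEquiv (GaloisField 2 n) 2 j) fun c => by
    show algebraMap (ZMod 2) (GaloisField 2 n) c ^ 2 ^ j = algebraMap _ _ c
    rw [← map_pow, zmod2_pow_pow]

lemma tr_pow {n : ℕ} (j : ℕ) (x : GaloisField 2 n) :
    Algebra.trace (ZMod 2) (GaloisField 2 n) (x ^ 2 ^ j) =
      Algebra.trace (ZMod 2) (GaloisField 2 n) x := by
  have h := Algebra.trace_eq_of_algEquiv (frobAlg n j) x
  rwa [show frobAlg n j x = x ^ 2 ^ j from rfl] at h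

/-- The sign function on `ZMod 2`. -/
def sgn (z : ZMod 2) : ℤ := if z = 0 then 1 else -1

lemma sgn_add : ∀ y z : ZMod 2, sgn (y + z) = sgn y * sgn z := by decide

lemma sgn_sq : ∀ z : ZMod 2, sgn z * sgn z = 1 := by decide

lemma sgn_flip : ∀ z : ZMod 2, z ≠ 0 → ∀ y : ZMod 2, sgn (y + z) = - sgn y := by decide

/-- `chi t = (-1)^{Tr t}` as an integer. -/
noncomputable def chi {n : ℕ} (t : GaloisField 2 n) : ℤ :=
  sgn (Algebra.trace (ZMod 2) (GaloisField 2 n) t)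

lemma card_gf {n : ℕ} (hn : 0 < n) : Fintype.card (GaloisField 2 n) = 2 ^ n := by
  have := GaloisField.card (p := 2) (n := n) hn.ne'
  rwa [Nat.card_eq_fintype_card] at this

open scoped Classical in
lemma chi_sum_mul {n : ℕ} (hn : 0 < n) (c : GaloisField 2 n) :
    ∑ x : GaloisField 2 n, chi (x * c) = if c = 0 then ((2 : ℤ) ^ n) else 0 := by
  classical
  split_ifs with hc
  · subst hc
    simp only [mul_zero, chi, map_zero, sgn, if_pos rfl]
    rw [Finset.sum_const, Finset.card_univ, card_gf hn]
    push_cast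
    ring
  · obtain ⟨w, hw⟩ := Algebra.trace_surjective (ZMod 2) (GaloisField 2 n) 1
    have hv : Algebra.trace (ZMod 2) (GaloisField 2 n) ((w / c) * c) = 1 := by
      rw [div_mul_cancel₀ _ hc]; exact hw
    have hpair : ∑ x : GaloisField 2 n, chi (x * c)
        = ∑ x : GaloisField 2 n, chi ((x + w / c) * c) :=
      Fintype.sum_equiv (Equiv.addRight (w / c)) _ _ (fun x => rfl) |>.symm
    have hflip : ∀ x : GaloisField 2 n, chi ((x + w / c) * c) = - chi (x * c) := by
      intro x
      unfold chi
      rw [add_mul, map_add, hv, sgn_flip 1 one_ne_zero]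
    have h0 : ∑ x : GaloisField 2 n, chi (x * c)
        = - ∑ x : GaloisField 2 n, chi (x * c) := by
      conv_lhs => rw [hpair]
      simp only [hflip, Finset.sum_neg_distrib]
    linarith

open scoped Classical in
/-- With `Q(x) = ∑ aᵢ x^{2^{kᵢ}+1}` and `L(u) = ∑ (aᵢ u^{2^{kᵢ}} + aᵢ^{2^{-kᵢ}} u^{2^{-kᵢ}})`,
the square of `∑_x (-1)^{Tr(Q(x))}` equals `0` or `2^n |K|` where `K = ker L`. -/
theorem stmt_9 (n m : ℕ) (hn : 0 < n) (a : Fin m → GaloisField 2 n) (kk : Fin m → ℕ)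
    (hkk : ∀ i, 0 < kk i) :
    (∑ x : GaloisField 2 n,
        if Algebra.trace (ZMod 2) (GaloisField 2 n)
            (∑ i, a i * x ^ (2 ^ kk i + 1)) = 0 then (1 : ℤ) else -1) ^ 2 = 0 ∨
      (∑ x : GaloisField 2 n,
          if Algebra.trace (ZMod 2) (GaloisField 2 n)
              (∑ i, a i * x ^ (2 ^ kk i + 1)) = 0 then (1 : ℤ) else -1) ^ 2 =
        2 ^ n *
          ((Finset.univ.filter (fun u : GaloisField 2 n =>
              (∑ i, (a i * u ^ 2 ^ kk i + ipow (kk i) (a i) * ipow (kk i) u)) = 0)).card : ℤ) := by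
  set Tr := Algebra.trace (ZMod 2) (GaloisField 2 n) with hTrdef
  set Qf : GaloisField 2 n → GaloisField 2 n := fun x => ∑ i, a i * x ^ (2 ^ kk i + 1) with hQdef
  set Lf : GaloisField 2 n → GaloisField 2 n :=
    fun u => ∑ i, (a i * u ^ 2 ^ kk i + ipow (kk i) (a i) * ipow (kk i) u) with hLdef
  -- rewrite the sum using chi
  have hS : (∑ x : GaloisField 2 n, if Tr (∑ i, a i * x ^ (2 ^ kk i + 1)) = 0 then (1 : ℤ) else -1)
      = ∑ x : GaloisField 2 n, chi (Qf x) := by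
    apply Finset.sum_congr rfl
    intro x _
    by_cases h : Tr (Qf x) = 0 <;> simp [chi, sgn, h, hQdef, hTrdef]
  rw [hS]
  set S := ∑ x : GaloisField 2 n, chi (Qf x) with hSdef
  set K := Finset.univ.filter (fun u : GaloisField 2 n => Lf u = 0) with hKdef
  -- key trace identity
  have key : ∀ x u : GaloisField 2 n, Tr (Qf (x + u)) = Tr (Qf x) + Tr (Qf u) + Tr (x * Lf u) := by
    intro x u
    have hQ : Qf (x + u) = Qf x + Qf u
        + ∑ i, (a i * (x ^ 2 ^ kk i * u) + a i * (x * u ^ 2 ^ kk i)) := by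
      simp only [hQdef]
      rw [← Finset.sum_add_distrib, ← Finset.sum_add_distrib]
      apply Finset.sum_congr rfl
      intro i _
      have h1 : (x + u) ^ 2 ^ kk i = x ^ 2 ^ kk i + u ^ 2 ^ kk i := add_pow_char_pow x u 2 (kk i)
      rw [pow_succ, h1, pow_succ, pow_succ]
      ring
    have hTr2 : Tr (∑ i, (a i * (x ^ 2 ^ kk i * u) + a i * (x * u ^ 2 ^ kk i)))
        = Tr (x * Lf u) := by
      have hx : x * Lf u
          = ∑ i, (x * (a i * u ^ 2 ^ kk i) + x * (ipow (kk i) (a i) * ipow (kk i) u)) := by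
        simp only [hLdef]
        rw [Finset.mul_sum]
        apply Finset.sum_congr rfl
        intro i _
        ring
      rw [hx, map_sum, map_sum]
      apply Finset.sum_congr rfl
      intro i _
      rw [map_add, map_add]
      have hA : Tr (a i * (x ^ 2 ^ kk i * u))
          = Tr (x * (ipow (kk i) (a i) * ipow (kk i) u)) := by
        rw [← tr_pow (kk i) (x * (ipow (kk i) (a i) * ipow (kk i) u))]
        congr 1
        rw [mul_pow, mul_pow, ipow_pow, ipow_pow]
        ring
      have hB : Tr (a i * (x * u ^ 2 ^ kk i)) = Tr (x * (a i * u ^ 2 ^ kk i)) := by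
        congr 1
        ring
      rw [hA, hB, add_comm]
    rw [hQ, map_add, map_add, hTr2]
  have keychi : ∀ x u : GaloisField 2 n, chi (Qf (x + u)) = chi (Qf x) * chi (Qf u) * chi (x * Lf u) := by
    intro x u
    unfold chi
    rw [← hTrdef, key, sgn_add, sgn_add]
  -- main computation: S² = 2ⁿ * ∑_{u ∈ K} chi (Qf u)
  have hS2 : S ^ 2 = 2 ^ n * ∑ u ∈ K, chi (Qf u) := by
    have e1 : S ^ 2 = ∑ x : GaloisField 2 n, ∑ y : GaloisField 2 n, chi (Qf x) * chi (Qf y) := by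
      rw [sq, hSdef, Finset.sum_mul_sum]
    have e2 : ∀ x : GaloisField 2 n, ∑ y : GaloisField 2 n, chi (Qf x) * chi (Qf y)
        = ∑ u : GaloisField 2 n, chi (Qf u) * chi (x * Lf u) := by
      intro x
      rw [← Fintype.sum_equiv (Equiv.addLeft x)
        (fun u => chi (Qf x) * chi (Qf (x + u))) (fun y => chi (Qf x) * chi (Qf y))
        (fun u => rfl)]
      apply Finset.sum_congr rfl
      intro u _
      rw [keychi x u, ← mul_assoc, ← mul_assoc]
      have : chi (Qf x) * chi (Qf x) = 1 := sgn_sq _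
      rw [this, one_mul]
    calc S ^ 2 = ∑ x : GaloisField 2 n, ∑ u : GaloisField 2 n, chi (Qf u) * chi (x * Lf u) := by
          rw [e1]; exact Finset.sum_congr rfl fun x _ => e2 x
      _ = ∑ u : GaloisField 2 n, ∑ x : GaloisField 2 n, chi (Qf u) * chi (x * Lf u) := Finset.sum_comm
      _ = ∑ u : GaloisField 2 n, chi (Qf u) * ∑ x : GaloisField 2 n, chi (x * Lf u) := by
          exact Finset.sum_congr rfl fun u _ => (Finset.mul_sum _ _ _).symm
      _ = ∑ u : GaloisField 2 n, chi (Qf u) * (if Lf u = 0 then ((2:ℤ) ^ n) else 0) := by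
          exact Finset.sum_congr rfl fun u _ => by rw [chi_sum_mul hn]
      _ = ∑ u : GaloisField 2 n, (if Lf u = 0 then chi (Qf u) * 2 ^ n else 0) := by
          exact Finset.sum_congr rfl fun u _ => by split_ifs <;> simp
      _ = ∑ u ∈ K, chi (Qf u) * 2 ^ n := (Finset.sum_filter _ _).symm
      _ = 2 ^ n * ∑ u ∈ K, chi (Qf u) := by rw [← Finset.sum_mul]; ring
  by_cases hall : ∀ u ∈ K, Tr (Qf u) = 0
  · right
    rw [hS2]
    congr 1
    have : ∀ u ∈ K, chi (Qf u) = 1 := fun u hu => by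
      unfold chi; rw [← hTrdef, hall u hu]; rfl
    rw [Finset.sum_congr rfl this, Finset.sum_const, nsmul_eq_mul, mul_one]
  · left
    push_neg at hall
    obtain ⟨v, hvK, hv⟩ := hall
    have hvL : Lf v = 0 := by
      have := hvK
      rw [hKdef, Finset.mem_filter] at this
      exact this.2
    -- Lf is additive
    have hLadd : ∀ u w : GaloisField 2 n, Lf (u + w) = Lf u + Lf w := by
      intro u w
      simp only [hLdef]
      rw [← Finset.sum_add_distrib]
      apply Finset.sum_congr rfl
      intro i _
      rw [add_pow_char_pow, ipow_add]
      ring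
    have hmemK : ∀ u : GaloisField 2 n, u ∈ K ↔ u + v ∈ K := by
      intro u
      simp only [hKdef, Finset.mem_filter, Finset.mem_univ, true_and]
      constructor
      · intro h; rw [hLadd, h, hvL, add_zero]
      · intro h
        have : Lf ((u + v) + v) = 0 := by rw [hLadd, h, hvL, add_zero]
        rwa [add_assoc, CharTwo.add_self_eq_zero, add_zero] at this
    have hflip : ∀ u ∈ K, chi (Qf (u + v)) = - chi (Qf u) := by
      intro u hu
      have huL : Lf u = 0 := by
        have := hu; rw [hKdef, Finset.mem_filter] at this; exact this.2
      unfold chi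
      rw [← hTrdef, key u v]
      have : Tr (u * Lf v) = 0 := by rw [hvL, mul_zero, map_zero]
      rw [this, add_zero, sgn_flip _ hv]
    have hzero : ∑ u ∈ K, chi (Qf u) = 0 := by
      have hpair : ∑ u ∈ K, chi (Qf u) = ∑ u ∈ K, chi (Qf (u + v)) := by
        refine Finset.sum_equiv (Equiv.addRight v) ?_ ?_ |>.symm
        · intro u
          exact ((hmemK u).symm : (Equiv.addRight v) u ∈ K ↔ u ∈ K).symm
        · intro u hu
          rfl
      have h0 : ∑ u ∈ K, chi (Qf u) = - ∑ u ∈ K, chi (Qf u) := by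
        conv_lhs => rw [hpair]
        rw [Finset.sum_congr rfl hflip, Finset.sum_neg_distrib]
      linarith
    rw [hS2, hzero, mul_zero]
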